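/- Let $d_1,\dots,d_s$ be positive integers. Then $I(d_1,\dots,d_s) = (-1)^s + (-1)^s \sum_{r=1}^{s} (-1)^r \sum_{1 \le i_1 < \cdots < i_r \le s} \frac{d_{i_1} \cdots d_{i_r}}{\mathrm{lcm}(d_{i_1},\dots,d_{i_r})}$. -/

import Mathlib

open Finset

lemma finset_gcd_bezout {ι : Type*} [DecidableEq ι] (T : Finset ι) (f : ι → ℕ) :
    ∃ c : ι → ℤ, ((T.gcd f : ℕ) : ℤ) = ∑ i ∈ T, c i * f i := by
  induction T using Finset.induction_on with
  | empty => exact ⟨0, by simp⟩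
  | @insert a T ha ih =>
    obtain ⟨c, hc⟩ := ih
    refine ⟨fun i => if i = a then Nat.gcdA (f a) (T.gcd f) else Nat.gcdB (f a) (T.gcd f) * c i, ?_⟩
    rw [Finset.gcd_insert, Finset.sum_insert ha]
    have h1 : (Nat.gcd (f a) (T.gcd f) : ℤ) = f a * Nat.gcdA (f a) (T.gcd f)
        + (T.gcd f) * Nat.gcdB (f a) (T.gcd f) := Nat.gcd_eq_gcd_ab _ _
    have h2 : GCDMonoid.gcd (f a) (T.gcd f) = Nat.gcd (f a) (T.gcd f) := rfl
    have h3 : ∑ i ∈ T, (if i = a then Nat.gcdA (f a) (T.gcd f)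
        else Nat.gcdB (f a) (T.gcd f) * c i) * f i
        = Nat.gcdB (f a) (T.gcd f) * ∑ i ∈ T, c i * f i := by
      rw [Finset.mul_sum]
      refine Finset.sum_congr rfl fun i hi => ?_
      rw [if_neg (by rintro rfl; exact ha hi)]
      ring
    rw [h2, h1]
    simp only [if_pos rfl, if_true]
    rw [h3, ← hc]
    ring

lemma count_mul (s : ℕ) (d : Fin s → ℕ) (hd : ∀ i, 0 < d i) (T : Finset (Fin s)) :
    ((Fintype.piFinset fun i => Finset.range (d i)).filter
      (fun y : Fin s → ℕ => (∀ i ∉ T, y i = 0) ∧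
        T.lcm d ∣ ∑ i ∈ T, y i * (T.lcm d / d i))).card * T.lcm d = ∏ i ∈ T, d i := by
  classical
  obtain ⟨L, hLdef⟩ : ∃ L, T.lcm d = L := ⟨_, rfl⟩
  rw [hLdef]
  have hdL : ∀ i ∈ T, d i ∣ L := fun i hi => hLdef ▸ Finset.dvd_lcm hi
  have hL : L ≠ 0 := by
    intro h
    rw [h] at hLdef
    rcases Finset.lcm_eq_zero_iff.mp hLdef with ⟨i, hi, hdi⟩
    exact (hd i).ne' hdi
  haveI : NeZero L := ⟨hL⟩
  haveI : ∀ i, NeZero (d i) := fun i => ⟨(hd i).ne'⟩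
  -- the homomorphisms
  have hfker : ∀ i : T, ((Int.castAddHom (ZMod L)).comp
      (AddMonoidHom.mulRight ((L / d i.1 : ℕ) : ℤ))) ((d i.1 : ℕ) : ℤ) = 0 := by
    intro i
    have h0 : ((d i.1 : ℕ) : ℤ) * ((L / d i.1 : ℕ) : ℤ) = ((L : ℕ) : ℤ) := by
      rw [← Nat.cast_mul, Nat.mul_div_cancel' (hdL i.1 i.2)]
    simp only [AddMonoidHom.comp_apply, AddMonoidHom.coe_mulRight, Int.coe_castAddHom, h0]
    exact_mod_cast ZMod.natCast_self L
  let ψ : ∀ i : T, ZMod (d i.1) →+ ZMod L := fun i =>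
    ZMod.lift (d i.1) ⟨_, hfker i⟩
  have hψ : ∀ (i : T) (x : ℤ),
      ψ i ((x : ℤ) : ZMod (d i.1)) = ((x * (L / d i.1 : ℕ) : ℤ) : ZMod L) := by
    intro i x
    simp [ψ, ZMod.lift_coe]
  let φ : ((i : T) → ZMod (d i.1)) →+ ZMod L :=
    { toFun := fun y => ∑ i, ψ i (y i)
      map_zero' := by simp
      map_add' := fun a b => by simp [Finset.sum_add_distrib] }
  -- value on casts of natural tuples
  have hphi : ∀ y : Fin s → ℕ, φ (fun i : T => ((y i.1 : ℕ) : ZMod (d i.1)))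
      = ((∑ i ∈ T, y i * (L / d i) : ℕ) : ZMod L) := by
    intro y
    show ∑ i : T, ψ i _ = _
    have h1 : ∀ i : T, ψ i ((y i.1 : ℕ) : ZMod (d i.1))
        = ((y i.1 * (L / d i.1) : ℕ) : ZMod L) := by
      intro i
      have h2 : ((y i.1 : ℕ) : ZMod (d i.1)) = (((y i.1 : ℕ) : ℤ) : ZMod (d i.1)) :=
        (Int.cast_natCast _).symm
      have h3 : ((y i.1 : ℕ) : ℤ) * ((L / d i.1 : ℕ) : ℤ) = ((y i.1 * (L / d i.1) : ℕ) : ℤ) := by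
        push_cast; ring
      rw [h2, hψ, h3, Int.cast_natCast]
    rw [Finset.sum_congr rfl fun i _ => h1 i, ← Nat.cast_sum]
    exact congrArg _ (Finset.sum_coe_sort T fun i => y i * (L / d i))
  -- surjectivity
  have hone : ∃ y, φ y = 1 := by
    rcases T.eq_empty_or_nonempty with hT | ⟨i0, hi0⟩
    · subst hT
      rw [Finset.lcm_empty] at hLdef
      subst hLdef
      exact ⟨0, Subsingleton.elim _ _⟩
    · have hg1 : T.gcd (fun i => L / d i) = 1 := by
        set g := T.gcd (fun i => L / d i) with hg
        have hgdvd : ∀ i ∈ T, g ∣ L / d i := fun i hi => Finset.gcd_dvd hi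
        have hgL : g ∣ L := (hgdvd i0 hi0).trans (Nat.div_dvd_of_dvd (hdL i0 hi0))
        have hg0 : g ≠ 0 := by
          intro h
          rw [h] at hgdvd
          have h1 := Nat.eq_zero_of_zero_dvd (hgdvd i0 hi0)
          have h2 : d i0 * (L / d i0) = L := Nat.mul_div_cancel' (hdL i0 hi0)
          rw [h1, Nat.mul_zero] at h2
          exact hL h2.symm
        have hdvd2 : ∀ i ∈ T, d i ∣ L / g := by
          intro i hi
          obtain ⟨k, hk⟩ := hgdvd i hi
          have h2 : L = g * (d i * k) := by
            rw [← Nat.mul_div_cancel' (hdL i hi), hk]; ring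
          rw [h2, Nat.mul_div_cancel_left _ (Nat.pos_of_ne_zero hg0)]
          exact Dvd.intro k rfl
        have hLdvd : L ∣ L / g := by
          have := Finset.lcm_dvd hdvd2
          rwa [hLdef] at this
        have hLg : L / g = L := Nat.dvd_antisymm (Nat.div_dvd_of_dvd hgL) hLdvd
        have h4 := Nat.div_mul_cancel hgL
        rw [hLg] at h4
        nlinarith [Nat.pos_of_ne_zero hL]
      obtain ⟨c, hc⟩ := finset_gcd_bezout T (fun i => L / d i)
      rw [hg1] at hc
      refine ⟨fun i : T => ((c i.1 : ℤ) : ZMod (d i.1)), ?_⟩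
      show ∑ i : T, ψ i _ = 1
      rw [Finset.sum_congr rfl fun (i : T) _ => hψ i (c i.1), ← Int.cast_sum,
        Finset.sum_coe_sort T fun i => c i * ((L / d i : ℕ) : ℤ), ← hc]
      norm_num
  have hsurj : Function.Surjective φ := by
    intro x
    obtain ⟨y, hy⟩ := hone
    refine ⟨x.val • y, ?_⟩
    rw [map_nsmul, hy, nsmul_eq_mul, mul_one]
    exact ZMod.natCast_rightInverse x
  -- cardinalities
  have hcard1 : Nat.card ((i : T) → ZMod (d i.1)) = ∏ i ∈ T, d i := by
    rw [Nat.card_pi]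
    simp only [Nat.card_zmod]
    exact Finset.prod_coe_sort T d
  have hcard2 : Nat.card ((i : T) → ZMod (d i.1)) = L * Nat.card φ.ker := by
    rw [AddSubgroup.card_eq_card_quotient_mul_card_addSubgroup φ.ker]
    congr 1
    rw [Nat.card_congr (QuotientAddGroup.quotientKerEquivRange φ).toEquiv,
      AddMonoidHom.range_eq_top_of_surjective φ hsurj]
    rw [Nat.card_congr AddSubgroup.topEquiv.toEquiv, Nat.card_zmod]
  -- the filter set is in bijection with the kernel
  have hbij : ((Fintype.piFinset fun i => Finset.range (d i)).filter
      (fun y : Fin s → ℕ => (∀ i ∉ T, y i = 0) ∧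
        L ∣ ∑ i ∈ T, y i * (L / d i))).card = Nat.card φ.ker := by
    rw [← Nat.card_eq_finsetCard]
    refine Nat.card_congr ?_
    exact
      { toFun := fun y => ⟨fun i : T => ((y.1 i.1 : ℕ) : ZMod (d i.1)), by
          have hy := Finset.mem_filter.mp y.2
          refine AddMonoidHom.mem_ker.mpr ?_
          rw [hphi y.1, ZMod.natCast_eq_zero_iff]
          exact hy.2.2⟩
        invFun := fun z => ⟨fun i => if h : i ∈ T then (z.1 ⟨i, h⟩).val else 0, by
          have hz : φ z.1 = 0 := z.2
          have hzz : (fun i : T =>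
              (((if h : i.1 ∈ T then (z.1 ⟨i.1, h⟩).val else 0) : ℕ) : ZMod (d i.1))) = z.1 := by
            funext i
            simp only [dif_pos i.2]
            exact ZMod.natCast_rightInverse (z.1 i)
          refine Finset.mem_filter.mpr ⟨?_, fun i hi => dif_neg hi, ?_⟩
          · refine Fintype.mem_piFinset.mpr fun i => Finset.mem_range.mpr ?_
            by_cases h : i ∈ T
            · rw [dif_pos h]; exact ZMod.val_lt _
            · rw [dif_neg h]; exact hd i
          · rw [← ZMod.natCast_eq_zero_iff,
              ← hphi (fun i => if h : i ∈ T then (z.1 ⟨i, h⟩).val else 0), hzz]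
            exact hz⟩
        left_inv := by
          rintro ⟨y, hy⟩
          obtain ⟨hy1, hy2, -⟩ := Finset.mem_filter.mp hy
          refine Subtype.ext (funext fun i => ?_)
          by_cases h : i ∈ T
          · simp only [dif_pos h]
            exact ZMod.val_natCast_of_lt (Finset.mem_range.mp (Fintype.mem_piFinset.mp hy1 i))
          · simp only [dif_neg h]
            exact (hy2 i h).symm
        right_inv := by
          rintro ⟨z, hz⟩
          refine Subtype.ext (funext fun i => ?_)
          simp only [dif_pos i.2]
          exact ZMod.natCast_rightInverse (z i) }
  rw [hbij, ← hcard1, hcard2, Nat.mul_comm]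

lemma pred_equiv (s : ℕ) (d : Fin s → ℕ) (hd : ∀ i, 0 < d i) (T : Finset (Fin s))
    (y : Fin s → ℕ) (hy : ∀ i ∉ T, y i = 0) :
    (∃ z : ℤ, ∑ i, (y i : ℚ) / (d i : ℚ) = (z : ℚ)) ↔
      T.lcm d ∣ ∑ i ∈ T, y i * (T.lcm d / d i) := by
  obtain ⟨L, hLdef⟩ : ∃ L, T.lcm d = L := ⟨_, rfl⟩
  rw [hLdef]
  have hdL : ∀ i ∈ T, d i ∣ L := fun i hi => hLdef ▸ Finset.dvd_lcm hi
  have hL : L ≠ 0 := by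
    intro h
    rw [h] at hLdef
    rcases Finset.lcm_eq_zero_iff.mp hLdef with ⟨i, hi, hdi⟩
    exact (hd i).ne' hdi
  have hLQ : (L : ℚ) ≠ 0 := Nat.cast_ne_zero.mpr hL
  have hsum1 : ∑ i, (y i : ℚ) / (d i : ℚ) = ∑ i ∈ T, (y i : ℚ) / (d i : ℚ) :=
    (Finset.sum_subset (Finset.subset_univ T) (fun i _ hi => by rw [hy i hi]; simp)).symm
  have hsum2 : ∑ i ∈ T, (y i : ℚ) / (d i : ℚ)
      = ((∑ i ∈ T, y i * (L / d i) : ℕ) : ℚ) / (L : ℚ) := by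
    rw [Nat.cast_sum, Finset.sum_div]
    refine Finset.sum_congr rfl fun i hi => ?_
    have hdiQ : (d i : ℚ) ≠ 0 := Nat.cast_ne_zero.mpr (hd i).ne'
    have hLm : (L : ℚ) = (d i : ℚ) * ((L / d i : ℕ) : ℚ) := by
      exact_mod_cast congrArg (Nat.cast (R := ℚ)) (Nat.mul_div_cancel' (hdL i hi)).symm
    rw [div_eq_div_iff hdiQ hLQ, hLm]
    push_cast
    ring
  rw [hsum1, hsum2]
  obtain ⟨A, hA⟩ : ∃ A, ∑ i ∈ T, y i * (L / d i) = A := ⟨_, rfl⟩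
  rw [hA]
  constructor
  · rintro ⟨z, hz⟩
    rw [div_eq_iff hLQ] at hz
    have hz' : ((A : ℕ) : ℤ) = z * L := by exact_mod_cast hz
    have : (L : ℤ) ∣ ((A : ℕ) : ℤ) := ⟨z, by linarith⟩
    exact_mod_cast this
  · rintro ⟨k, hk⟩
    refine ⟨(k : ℤ), ?_⟩
    rw [hk]
    push_cast
    field_simp

open scoped Classical in
lemma cardNS (s : ℕ) (d : Fin s → ℕ) (hd : ∀ i, 0 < d i) (T : Finset (Fin s)) :
    ((((Fintype.piFinset fun i => Finset.range (d i)).filter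
      (fun y : Fin s → ℕ => (∀ i ∉ T, y i = 0) ∧
        ∃ z : ℤ, ∑ i, (y i : ℚ) / (d i : ℚ) = (z : ℚ))).card : ℕ) : ℚ)
      = (∏ i ∈ T, (d i : ℚ)) / ((T.lcm d : ℕ) : ℚ) := by
  have hL : T.lcm d ≠ 0 := by
    intro h
    rcases Finset.lcm_eq_zero_iff.mp h with ⟨i, hi, hdi⟩
    exact (hd i).ne' hdi
  have heq : ((Fintype.piFinset fun i => Finset.range (d i)).filter
      (fun y : Fin s → ℕ => (∀ i ∉ T, y i = 0) ∧
        ∃ z : ℤ, ∑ i, (y i : ℚ) / (d i : ℚ) = (z : ℚ)))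
      = ((Fintype.piFinset fun i => Finset.range (d i)).filter
      (fun y : Fin s → ℕ => (∀ i ∉ T, y i = 0) ∧
        T.lcm d ∣ ∑ i ∈ T, y i * (T.lcm d / d i))) := by
    refine Finset.filter_congr fun y _ => ?_
    exact and_congr_right fun h1 => pred_equiv s d hd T y h1
  rw [heq, eq_div_iff (Nat.cast_ne_zero.mpr hL)]
  have := count_mul s d hd T
  have hcast := congrArg (Nat.cast (R := ℚ)) this
  push_cast at hcast ⊢
  convert hcast using 2

open scoped Classical in
lemma partition (s : ℕ) (d : Fin s → ℕ) (T : Finset (Fin s)) :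
    ((Fintype.piFinset fun i => Finset.range (d i)).filter
      (fun y : Fin s → ℕ => (∀ i ∉ T, y i = 0) ∧
        ∃ z : ℤ, ∑ i, (y i : ℚ) / (d i : ℚ) = (z : ℚ))).card
      = ∑ S ∈ T.powerset, ((Fintype.piFinset fun i => Finset.range (d i)).filter
      (fun y : Fin s → ℕ => (∀ i, i ∈ S ↔ y i ≠ 0) ∧
        ∃ z : ℤ, ∑ i, (y i : ℚ) / (d i : ℚ) = (z : ℚ))).card := by
  have hset : ((Fintype.piFinset fun i => Finset.range (d i)).filter
      (fun y : Fin s → ℕ => (∀ i ∉ T, y i = 0) ∧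
        ∃ z : ℤ, ∑ i, (y i : ℚ) / (d i : ℚ) = (z : ℚ)))
      = T.powerset.biUnion (fun S => (Fintype.piFinset fun i => Finset.range (d i)).filter
      (fun y : Fin s → ℕ => (∀ i, i ∈ S ↔ y i ≠ 0) ∧
        ∃ z : ℤ, ∑ i, (y i : ℚ) / (d i : ℚ) = (z : ℚ))) := by
    ext y
    simp only [Finset.mem_filter, Finset.mem_biUnion, Finset.mem_powerset]
    constructor
    · rintro ⟨hbox, hzero, hP⟩
      refine ⟨Finset.univ.filter (fun i => y i ≠ 0), ?_, hbox, fun i => ?_, hP⟩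
      · intro i hi
        simp only [Finset.mem_filter, Finset.mem_univ, true_and] at hi
        by_contra hT
        exact hi (hzero i hT)
      · simp
    · rintro ⟨S, hST, hbox, hsupp, hP⟩
      refine ⟨hbox, fun i hi => ?_, hP⟩
      by_contra h0
      exact hi (hST ((hsupp i).mpr h0))
  rw [hset]
  refine Finset.card_biUnion ?_
  intro S1 h1 S2 h2 hne
  rw [Function.onFun, Finset.disjoint_left]
  intro y hy1 hy2
  refine hne ?_
  obtain ⟨-, hs1, -⟩ := Finset.mem_filter.mp hy1
  obtain ⟨-, hs2, -⟩ := Finset.mem_filter.mp hy2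
  ext i
  rw [hs1 i, hs2 i]

lemma neg_one_pow_sub (n k : ℕ) (h : k ≤ n) : (-1 : ℚ) ^ (n - k) = (-1) ^ n * (-1) ^ k := by
  have h1 : (-1 : ℚ) ^ (n - k) * (-1) ^ k = (-1) ^ n := by
    rw [← pow_add]; congr 1; omega
  have h2 : (-1 : ℚ) ^ k * (-1) ^ k = 1 := by
    rw [← pow_add]; exact Even.neg_one_pow ⟨k, rfl⟩
  calc (-1 : ℚ) ^ (n - k) = (-1) ^ (n - k) * ((-1) ^ k * (-1) ^ k) := by rw [h2, mul_one]
    _ = ((-1) ^ (n - k) * (-1) ^ k) * (-1) ^ k := by ring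
    _ = (-1) ^ n * (-1) ^ k := by rw [h1]

lemma superset_sum {α : Type*} [Fintype α] [DecidableEq α] (S : Finset α) :
    ∑ T ∈ Finset.univ.powerset.filter (fun T => S ⊆ T),
        (-1 : ℚ) ^ (Fintype.card α - T.card)
      = if S = Finset.univ then 1 else 0 := by
  rw [Finset.sum_nbij' (i := fun T => T \ S) (j := fun U => S ∪ U)
    (t := Sᶜ.powerset) (g := fun U => (-1 : ℚ) ^ (Sᶜ.card - U.card))]
  · have hterm : ∀ U ∈ Sᶜ.powerset, (-1 : ℚ) ^ (Sᶜ.card - U.card)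
        = (-1) ^ Sᶜ.card * (-1) ^ U.card := by
      intro U hU
      rw [Finset.mem_powerset] at hU
      have hle := Finset.card_le_card hU
      have h1 : (-1 : ℚ) ^ (Sᶜ.card - U.card) * (-1) ^ U.card = (-1) ^ Sᶜ.card := by
        rw [← pow_add]
        congr 1
        omega
      have h2 : (-1 : ℚ) ^ U.card * (-1) ^ U.card = 1 := by
        rw [← pow_add]
        exact Even.neg_one_pow ⟨U.card, rfl⟩
      calc (-1 : ℚ) ^ (Sᶜ.card - U.card)
          = (-1) ^ (Sᶜ.card - U.card) * ((-1) ^ U.card * (-1) ^ U.card) := by rw [h2, mul_one]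
        _ = ((-1) ^ (Sᶜ.card - U.card) * (-1) ^ U.card) * (-1) ^ U.card := by ring
        _ = (-1) ^ Sᶜ.card * (-1) ^ U.card := by rw [h1]
    rw [Finset.sum_congr rfl hterm, ← Finset.mul_sum]
    have hcast : ∑ U ∈ Sᶜ.powerset, (-1 : ℚ) ^ U.card
        = (((∑ U ∈ Sᶜ.powerset, (-1 : ℤ) ^ U.card) : ℤ) : ℚ) := by push_cast; rfl
    rw [hcast, Finset.sum_powerset_neg_one_pow_card]
    by_cases h : S = Finset.univ
    · subst h
      simp
    · have hne : Sᶜ ≠ ∅ := by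
        intro hc
        exact h (by simpa using congrArg compl hc)
      simp [h, hne]
  · intro T hT
    simp only [Finset.mem_filter, Finset.mem_powerset] at hT
    rw [Finset.mem_powerset]
    intro i hi
    rw [Finset.mem_sdiff] at hi
    simp [hi.2]
  · intro U hU
    rw [Finset.mem_powerset] at hU
    simp only [Finset.mem_filter, Finset.mem_powerset]
    exact ⟨Finset.subset_univ _, Finset.subset_union_left⟩
  · intro T hT
    simp only [Finset.mem_filter, Finset.mem_powerset] at hT
    exact Finset.union_sdiff_of_subset hT.2
  · intro U hU
    rw [Finset.mem_powerset] at hU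
    have hdisj : Disjoint S U := (@disjoint_compl_right (Finset α) _ S).mono_right hU
    exact Finset.union_sdiff_cancel_left hdisj
  · intro T hT
    simp only [Finset.mem_filter, Finset.mem_powerset] at hT
    congr 1
    have h1 : (T \ S).card = T.card - S.card := Finset.card_sdiff_of_subset hT.2
    have h2 : S.card ≤ T.card := Finset.card_le_card hT.2
    have h3 : T.card ≤ Fintype.card α := T.card_le_univ
    have h4 : Sᶜ.card = Fintype.card α - S.card := by
      rw [Finset.card_compl]
    omega

open scoped Classical in
lemma keylemma (s : ℕ) (d : Fin s → ℕ) (hd : ∀ i, 0 < d i) :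
    ((((Fintype.piFinset fun i => Finset.range (d i)).filter
      (fun y : Fin s → ℕ => (∀ i, i ∈ (Finset.univ : Finset (Fin s)) ↔ y i ≠ 0) ∧
        ∃ z : ℤ, ∑ i, (y i : ℚ) / (d i : ℚ) = (z : ℚ))).card : ℕ) : ℚ)
      = ∑ T ∈ (Finset.univ : Finset (Fin s)).powerset,
          (-1 : ℚ) ^ (s - T.card) * ((∏ i ∈ T, (d i : ℚ)) / ((T.lcm d : ℕ) : ℚ)) := by
  have hpart : ∀ T : Finset (Fin s),
      ((((Fintype.piFinset fun i => Finset.range (d i)).filter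
        (fun y : Fin s → ℕ => (∀ i ∉ T, y i = 0) ∧
          ∃ z : ℤ, ∑ i, (y i : ℚ) / (d i : ℚ) = (z : ℚ))).card : ℕ) : ℚ)
        = ∑ S ∈ T.powerset, ((((Fintype.piFinset fun i => Finset.range (d i)).filter
        (fun y : Fin s → ℕ => (∀ i, i ∈ S ↔ y i ≠ 0) ∧
          ∃ z : ℤ, ∑ i, (y i : ℚ) / (d i : ℚ) = (z : ℚ))).card : ℕ) : ℚ) := by
    intro T
    rw [partition s d T]
    push_cast
    rfl
  symm
  calc ∑ T ∈ (Finset.univ : Finset (Fin s)).powerset,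
        (-1 : ℚ) ^ (s - T.card) * ((∏ i ∈ T, (d i : ℚ)) / ((T.lcm d : ℕ) : ℚ))
      = ∑ T ∈ (Finset.univ : Finset (Fin s)).powerset,
        (-1 : ℚ) ^ (s - T.card) * ((((Fintype.piFinset fun i => Finset.range (d i)).filter
          (fun y : Fin s → ℕ => (∀ i ∉ T, y i = 0) ∧
            ∃ z : ℤ, ∑ i, (y i : ℚ) / (d i : ℚ) = (z : ℚ))).card : ℕ) : ℚ) := by
        refine Finset.sum_congr rfl fun T _ => ?_
        rw [cardNS s d hd T]
    _ = ∑ T ∈ (Finset.univ : Finset (Fin s)).powerset,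
        ∑ S ∈ T.powerset, (-1 : ℚ) ^ (s - T.card) *
          ((((Fintype.piFinset fun i => Finset.range (d i)).filter
          (fun y : Fin s → ℕ => (∀ i, i ∈ S ↔ y i ≠ 0) ∧
            ∃ z : ℤ, ∑ i, (y i : ℚ) / (d i : ℚ) = (z : ℚ))).card : ℕ) : ℚ) := by
        refine Finset.sum_congr rfl fun T _ => ?_
        rw [hpart T, Finset.mul_sum]
    _ = ∑ S ∈ (Finset.univ : Finset (Fin s)).powerset,
        ∑ T ∈ (Finset.univ : Finset (Fin s)).powerset.filter (fun T => S ⊆ T),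
          (-1 : ℚ) ^ (s - T.card) *
          ((((Fintype.piFinset fun i => Finset.range (d i)).filter
          (fun y : Fin s → ℕ => (∀ i, i ∈ S ↔ y i ≠ 0) ∧
            ∃ z : ℤ, ∑ i, (y i : ℚ) / (d i : ℚ) = (z : ℚ))).card : ℕ) : ℚ) := by
        refine Finset.sum_comm' fun T S => ?_
        simp only [Finset.mem_powerset, Finset.mem_filter, Finset.subset_univ, true_and, and_true]
    _ = ∑ S ∈ (Finset.univ : Finset (Fin s)).powerset,
        (∑ T ∈ (Finset.univ : Finset (Fin s)).powerset.filter (fun T => S ⊆ T),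
          (-1 : ℚ) ^ (s - T.card)) *
          ((((Fintype.piFinset fun i => Finset.range (d i)).filter
          (fun y : Fin s → ℕ => (∀ i, i ∈ S ↔ y i ≠ 0) ∧
            ∃ z : ℤ, ∑ i, (y i : ℚ) / (d i : ℚ) = (z : ℚ))).card : ℕ) : ℚ) := by
        refine Finset.sum_congr rfl fun S _ => ?_
        rw [Finset.sum_mul]
    _ = ∑ S ∈ (Finset.univ : Finset (Fin s)).powerset,
        (if S = Finset.univ then (1 : ℚ) else 0) *
          ((((Fintype.piFinset fun i => Finset.range (d i)).filter
          (fun y : Fin s → ℕ => (∀ i, i ∈ S ↔ y i ≠ 0) ∧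
            ∃ z : ℤ, ∑ i, (y i : ℚ) / (d i : ℚ) = (z : ℚ))).card : ℕ) : ℚ) := by
        refine Finset.sum_congr rfl fun S _ => ?_
        have h := superset_sum S
        rw [Fintype.card_fin] at h
        rw [h]
    _ = ((((Fintype.piFinset fun i => Finset.range (d i)).filter
          (fun y : Fin s → ℕ => (∀ i, i ∈ (Finset.univ : Finset (Fin s)) ↔ y i ≠ 0) ∧
            ∃ z : ℤ, ∑ i, (y i : ℚ) / (d i : ℚ) = (z : ℚ))).card : ℕ) : ℚ) := by
        rw [Finset.sum_eq_single (Finset.univ : Finset (Fin s))]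
        · rw [if_pos rfl, one_mul]
        · intro b _ hb
          rw [if_neg hb, zero_mul]
        · intro h
          exact absurd (Finset.mem_powerset.mpr (subset_refl _)) h

theorem stmt1 (s : ℕ) (d : Fin s → ℕ) (hd : ∀ i, 0 < d i) :
    (Nat.card {y : Fin s → ℕ //
        (∀ i, 1 ≤ y i ∧ y i ≤ d i - 1) ∧
        ∃ z : ℤ, ∑ i, (y i : ℚ) / (d i : ℚ) = (z : ℚ)} : ℚ) =
      (-1) ^ s + (-1) ^ s *
        ∑ r ∈ Finset.Icc 1 s, (-1 : ℚ) ^ r *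
          ∑ T ∈ (Finset.univ : Finset (Fin s)).powerset.filter (fun T => T.card = r),
            (∏ i ∈ T, (d i : ℚ)) / ((Finset.lcm T d : ℕ) : ℚ) := by
  classical
  have hC : Nat.card {y : Fin s → ℕ //
        (∀ i, 1 ≤ y i ∧ y i ≤ d i - 1) ∧
        ∃ z : ℤ, ∑ i, (y i : ℚ) / (d i : ℚ) = (z : ℚ)}
      = ((Fintype.piFinset fun i => Finset.range (d i)).filter
          (fun y : Fin s → ℕ => (∀ i, i ∈ (Finset.univ : Finset (Fin s)) ↔ y i ≠ 0) ∧
            ∃ z : ℤ, ∑ i, (y i : ℚ) / (d i : ℚ) = (z : ℚ))).card := by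
    rw [← Nat.card_eq_finsetCard]
    refine Nat.card_congr (Equiv.subtypeEquiv (Equiv.refl _) fun y => ?_)
    simp only [Equiv.refl_apply, Finset.mem_coe, Finset.mem_filter, Fintype.mem_piFinset,
      Finset.mem_range, Finset.mem_univ, true_iff]
    constructor
    · rintro ⟨h1, hP⟩
      refine ⟨fun i => ?_, fun i => ?_, hP⟩
      · have := (h1 i).2; have := hd i; omega
      · have := (h1 i).1; omega
    · rintro ⟨h1, h2, hP⟩
      refine ⟨fun i => ?_, hP⟩
      have ha := h1 i
      have hb := h2 i
      have := hd i
      omega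
  rw [hC, keylemma s d hd]
  clear hC
  -- now regroup the sum over the powerset by cardinality
  rw [Finset.sum_powerset]
  have hcardu : (Finset.univ : Finset (Fin s)).card = s := by simp
  rw [hcardu]
  have hrange : Finset.range (s + 1) = insert 0 (Finset.Icc 1 s) := by
    ext x
    simp only [Finset.mem_range, Finset.mem_insert, Finset.mem_Icc]
    omega
  rw [hrange, Finset.sum_insert (by simp)]
  congr 1
  · rw [Finset.powersetCard_zero]
    simp
  · rw [Finset.mul_sum]
    refine Finset.sum_congr rfl fun j hj => ?_
    rw [Finset.mem_Icc] at hj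
    have hpc : Finset.powersetCard j (Finset.univ : Finset (Fin s))
        = (Finset.univ : Finset (Fin s)).powerset.filter (fun T => T.card = j) := by
      ext T
      simp [Finset.mem_powersetCard, Finset.mem_powerset, Finset.mem_filter]
    rw [hpc]
    have hsum : ∑ T ∈ (Finset.univ : Finset (Fin s)).powerset.filter (fun T => T.card = j),
        (-1 : ℚ) ^ (s - T.card) * ((∏ i ∈ T, (d i : ℚ)) / ((T.lcm d : ℕ) : ℚ))
        = ∑ T ∈ (Finset.univ : Finset (Fin s)).powerset.filter (fun T => T.card = j),
        (-1 : ℚ) ^ s * ((-1) ^ j * ((∏ i ∈ T, (d i : ℚ)) / ((T.lcm d : ℕ) : ℚ))) := by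
      refine Finset.sum_congr rfl fun T hT => ?_
      rw [(Finset.mem_filter.mp hT).2, neg_one_pow_sub s j hj.2]
      ring
    rw [hsum, ← Finset.mul_sum, ← Finset.mul_sum]
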